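/- For all integers k ≥ 3 and all sufficiently large n, every k-uniform hypergraph H on [n] containing no minimal 3-path satisfies co₂(H) ≤ C(n-1,k-1)·(1 + (n-k+1)(k-1)), with equality only if H is a star. -/

import Mathlib

namespace M3P

def gb (k m : ℕ) : ℕ := (m-1).choose (k-1) * (1 + (m-k+1)*(k-1))
def Kk (k : ℕ) : ℕ := k^3 + k
def Bk (k : ℕ) : ℕ := k * Kk k * ((Kk k).choose k) + 1
def n0 (k : ℕ) : ℕ := gb k (Bk k + k) + k * Bk k + Bk k + 2*k + 2

variable {n : ℕ}

def co2 (k : ℕ) (H : Finset (Finset (Fin n))) : ℕ :=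
  ∑ E ∈ Finset.univ.powersetCard (k-1), ((H.filter fun A => E ⊆ A).card) ^ 2

def pf (H : Finset (Finset (Fin n))) : Prop :=
  ¬ ∃ E₁ ∈ H, ∃ E₂ ∈ H, ∃ E₃ ∈ H,
      (E₁ ∩ E₂).Nonempty ∧ (E₂ ∩ E₃).Nonempty ∧ E₁ ∩ E₃ = ∅ ∧ E₁ ∩ E₂ ∩ E₃ = ∅

def grd (H : Finset (Finset (Fin n))) : Finset (Fin n) := H.sup id

lemma choose_lb {a j : ℕ} (h1 : 1 ≤ j) (h2 : j ≤ a) : a + 1 - j ≤ a.choose j := by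
  induction a generalizing j with
  | zero => omega
  | succ n ih =>
    rcases Nat.lt_or_ge j (n+1) with h | h
    · obtain ⟨j', rfl⟩ : ∃ j', j = j' + 1 := ⟨j - 1, by omega⟩
      rw [Nat.choose_succ_succ]
      simp only [Nat.succ_eq_add_one]
      rcases Nat.eq_zero_or_pos j' with rfl | hj'
      · simpa using by omega
      · have h3 := ih (j := j'+1) (by omega) (by omega)
        have h4 : 1 ≤ n.choose j' := Nat.choose_pos (by omega)
        omega
    · have : j = n + 1 := by omega
      subst this
      simp

lemma choose_add_le {x y r : ℕ} (hr : 1 ≤ r) : x.choose r + y.choose r ≤ (x+y).choose r := by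
  induction y with
  | zero =>
    rw [show Nat.choose 0 r = 0 from Nat.choose_eq_zero_of_lt (by omega)]
    simp
  | succ m ih =>
    obtain ⟨r', rfl⟩ : ∃ r', r = r' + 1 := ⟨r - 1, by omega⟩
    have h1 : (x + (m+1)).choose (r'+1) = (x+m).choose r' + (x+m).choose (r'+1) := by
      have hxm : x + (m+1) = (x+m) + 1 := by omega
      rw [hxm, Nat.choose_succ_succ']
    have h2 : (m+1).choose (r'+1) = m.choose r' + m.choose (r'+1) := by
      rw [Nat.choose_succ_succ']
    have h3 : m.choose r' ≤ (x+m).choose r' := Nat.choose_le_choose _ (by omega)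
    omega

/-- key identity: `C(m-1,k-1) * (k-1) = C(m-1,k-2) * (m-k+1)` for `m ≥ k ≥ 2`. -/
lemma choose_identity {k m : ℕ} (hk : 2 ≤ k) (hm : k ≤ m) :
    (m-1).choose (k-1) * (k-1) = (m-1).choose (k-2) * (m-k+1) := by
  have h1 : k - 1 = (k-2) + 1 := by omega
  have h2 : (m-1) - (k-2) = m - k + 1 := by omega
  rw [h1, Nat.choose_succ_right_eq, h2]

lemma gb_zero (k : ℕ) (hk : 2 ≤ k) : gb k 0 = 0 := by
  simp [gb, Nat.choose_eq_zero_of_lt (by omega : (0:ℕ)-1 < k-1), Nat.choose_eq_zero_of_lt (by omega : 0 < k-1)]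

lemma gb_mono (k : ℕ) {a b : ℕ} (h : a ≤ b) : gb k a ≤ gb k b := by
  apply Nat.mul_le_mul
  · exact Nat.choose_le_choose _ (by omega)
  · have h1 : a - k + 1 ≤ b - k + 1 := by omega
    have := Nat.mul_le_mul_right (k-1) h1
    omega

lemma gb_superadd_strict {k a b : ℕ} (hk : 3 ≤ k) (ha : k ≤ a) (hb : k ≤ b) :
    gb k a + gb k b + 1 ≤ gb k (a+b) := by
  have key : ∀ (Ca Cb CC wa wb W s t : ℕ), 1 ≤ Ca → 1 ≤ s → Ca + Cb ≤ CC →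
      wa + s = W → wb + t = W → Ca*wa + Cb*wb + 1 ≤ CC*W := by
    intro Ca Cb CC wa wb W s t h1 h2 h3 h4 h5
    have : (Ca + Cb) * W ≤ CC * W := Nat.mul_le_mul_right _ h3
    nlinarith
  have hCa1 : 1 ≤ (a-1).choose (k-1) := Nat.choose_pos (by omega)
  have hA : (a-1).choose (k-1) + (b-1).choose (k-1) ≤ (a+b-1).choose (k-1) := by
    have h1 : (b-1).choose (k-1) ≤ b.choose (k-1) := Nat.choose_le_choose _ (by omega)
    have h2 : (a-1).choose (k-1) + b.choose (k-1) ≤ ((a-1)+b).choose (k-1) :=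
      choose_add_le (by omega)
    rw [show (a-1) + b = a + b - 1 by omega] at h2
    omega
  have hw : (1 + (a-k+1)*(k-1)) + b*(k-1) = 1 + (a+b-k+1)*(k-1) := by
    have h3 : a + b - k + 1 = (a-k+1) + b := by omega
    rw [h3, Nat.add_mul]; ring
  have hw' : (1 + (b-k+1)*(k-1)) + a*(k-1) = 1 + (a+b-k+1)*(k-1) := by
    have h3 : a + b - k + 1 = (b-k+1) + a := by omega
    rw [h3, Nat.add_mul]; ring
  have hs : 1 ≤ b*(k-1) := by
    have hb1 : 1 ≤ b := by omega
    have hk1 : 1 ≤ k-1 := by omega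
    exact Nat.one_le_iff_ne_zero.mpr (by positivity)
  exact key _ _ _ _ _ _ _ _ hCa1 hs hA hw hw'

lemma gb_superadd {k a b : ℕ} (hk : 3 ≤ k) (ha : a = 0 ∨ k ≤ a) (hb : b = 0 ∨ k ≤ b) :
    gb k a + gb k b ≤ gb k (a+b) := by
  rcases ha with rfl | ha
  · simp [gb_zero k (by omega)]
  rcases hb with rfl | hb
  · simp [gb_zero k (by omega)]
  have := gb_superadd_strict hk ha hb
  omega


lemma mem_grd {H : Finset (Finset (Fin n))} {A} (hA : A ∈ H) : A ⊆ grd H :=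
  Finset.le_sup (f := id) hA

lemma mem_grd_iff {H : Finset (Finset (Fin n))} {x} : x ∈ grd H ↔ ∃ A ∈ H, x ∈ A := by
  simp [grd]

lemma grd_mono {H₁ H₂ : Finset (Finset (Fin n))} (h : H₁ ⊆ H₂) : grd H₁ ⊆ grd H₂ := by
  intro x hx
  rw [mem_grd_iff] at hx ⊢
  obtain ⟨A, hA, hxA⟩ := hx
  exact ⟨A, h hA, hxA⟩

lemma sum_deg (k : ℕ) (hk : 1 ≤ k) (H : Finset (Finset (Fin n)))
    (hu : ∀ A ∈ H, A.card = k) :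
    ∑ E ∈ Finset.univ.powersetCard (k-1), (H.filter fun A => E ⊆ A).card = k * H.card := by
  have hcf : ∀ E : Finset (Fin n), (H.filter fun A => E ⊆ A).card
      = ∑ A ∈ H, if E ⊆ A then 1 else 0 := fun E => Finset.card_filter _ _
  rw [Finset.sum_congr rfl (fun E _ => hcf E), Finset.sum_comm]
  have inner : ∀ A ∈ H,
      (∑ E ∈ Finset.univ.powersetCard (k-1), if E ⊆ A then 1 else 0) = k := by
    intro A hA
    rw [← Finset.card_filter]
    have heq : (Finset.univ.powersetCard (k-1)).filter (fun E => E ⊆ A)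
        = A.powersetCard (k-1) := by
      ext E
      simp only [Finset.mem_filter, Finset.mem_powersetCard, Finset.subset_univ, true_and]
      tauto
    rw [heq, Finset.card_powersetCard, hu A hA,
      ← Nat.choose_symm (by omega : k-1 ≤ k), show k - (k-1) = 1 by omega,
      Nat.choose_one_right]
  rw [Finset.sum_congr rfl inner, Finset.sum_const, smul_eq_mul, mul_comm]

lemma deg_le {k : ℕ} (hk : 1 ≤ k) {H : Finset (Finset (Fin n))} {V : Finset (Fin n)}
    (hV : ∀ A ∈ H, A ⊆ V) (hu : ∀ A ∈ H, A.card = k) {E : Finset (Fin n)}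
    (hE : E.card = k-1) :
    (H.filter fun A => E ⊆ A).card ≤ V.card - k + 1 := by
  by_cases hne : (H.filter fun A => E ⊆ A).Nonempty
  · obtain ⟨A₀, hA₀⟩ := hne
    rw [Finset.mem_filter] at hA₀
    have hEV : E ⊆ V := hA₀.2.trans (hV _ hA₀.1)
    have hle : (H.filter fun A => E ⊆ A).card ≤ ((V \ E).powersetCard 1).card := by
      apply Finset.card_le_card_of_injOn (fun A => A \ E)
      · intro A hA
        rw [Finset.mem_coe, Finset.mem_filter] at hA
        rw [Finset.mem_coe, Finset.mem_powersetCard]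
        refine ⟨Finset.sdiff_subset_sdiff (hV _ hA.1) le_rfl, ?_⟩
        rw [Finset.card_sdiff_of_subset hA.2, hu _ hA.1, hE]
        omega
      · intro A hA B hB hAB
        rw [Finset.mem_coe, Finset.mem_filter] at hA hB
        simp only at hAB
        have : E ∪ A \ E = E ∪ B \ E := by rw [hAB]
        rwa [Finset.union_sdiff_of_subset hA.2, Finset.union_sdiff_of_subset hB.2] at this
    rw [Finset.card_powersetCard, Finset.card_sdiff_of_subset hEV, hE, Nat.choose_one_right] at hle
    have := Finset.card_le_card hEV
    omega
  · rw [Finset.not_nonempty_iff_eq_empty] at hne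
    simp [hne]

lemma edges_le {k : ℕ} {H : Finset (Finset (Fin n))} {V : Finset (Fin n)}
    (hV : ∀ A ∈ H, A ⊆ V) (hu : ∀ A ∈ H, A.card = k) :
    H.card ≤ V.card.choose k := by
  rw [← Finset.card_powersetCard k V]
  apply Finset.card_le_card
  intro A hA
  rw [Finset.mem_powersetCard]
  exact ⟨hV _ hA, hu _ hA⟩

lemma co2_le_crude (k : ℕ) (hk : 1 ≤ k) (H : Finset (Finset (Fin n))) {V : Finset (Fin n)}
    (hV : ∀ A ∈ H, A ⊆ V) (hu : ∀ A ∈ H, A.card = k) :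
    co2 k H ≤ (V.card - k + 1) * (k * H.card) := by
  unfold co2
  calc ∑ E ∈ Finset.univ.powersetCard (k-1), ((H.filter fun A => E ⊆ A).card) ^ 2
      ≤ ∑ E ∈ Finset.univ.powersetCard (k-1),
        (V.card - k + 1) * (H.filter fun A => E ⊆ A).card := by
        apply Finset.sum_le_sum
        intro E hE
        rw [Finset.mem_powersetCard] at hE
        rw [pow_two]
        exact Nat.mul_le_mul_right _ (deg_le hk hV hu hE.2)
    _ = (V.card - k + 1) * (k * H.card) := by
        rw [← Finset.mul_sum, sum_deg k hk H hu]


lemma gb_eq {k m : ℕ} (hk : 2 ≤ k) (hm : k ≤ m) :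
    gb k m = (m-1).choose (k-2) * (m-k+1)^2 + (m-1).choose (k-1) := by
  unfold gb
  rw [show (m-1).choose (k-1) * (1 + (m-k+1)*(k-1))
      = (m-1).choose (k-1) + (m-1).choose (k-1) * (k-1) * (m-k+1) from by ring,
    choose_identity hk hm]
  ring

lemma co2_substar {k : ℕ} (hk : 3 ≤ k) {H : Finset (Finset (Fin n))} {V : Finset (Fin n)}
    {v : Fin n} (hv : ∀ A ∈ H, v ∈ A) (hV : ∀ A ∈ H, A ⊆ V) (hvV : v ∈ V)
    (hu : ∀ A ∈ H, A.card = k) (hkV : k ≤ V.card) :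
    co2 k H ≤ gb k V.card := by
  classical
  unfold co2
  set P := (Finset.univ : Finset (Fin n)).powersetCard (k-1) with hP
  set p : Finset (Fin n) → Prop := fun E => v ∈ E ∧ E ⊆ V with hp
  have hsplit := Finset.sum_filter_add_sum_filter_not P p
    (fun E => ((H.filter fun A => E ⊆ A).card) ^ 2)
  have hS1 : ∑ E ∈ P.filter (fun E => p E), ((H.filter fun A => E ⊆ A).card) ^ 2
      ≤ (V.card - 1).choose (k-2) * (V.card - k + 1)^2 := by
    have hcard : (P.filter (fun E => p E)).card ≤ (V.card - 1).choose (k-2) := by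
      have hinj : (P.filter (fun E => p E)).card ≤ ((V.erase v).powersetCard (k-2)).card := by
        apply Finset.card_le_card_of_injOn (fun E => E.erase v)
        · intro E hE
          rw [Finset.mem_coe, Finset.mem_filter, hP, Finset.mem_powersetCard] at hE
          obtain ⟨⟨-, hEk⟩, hvE, hEV⟩ := hE
          rw [Finset.mem_coe, Finset.mem_powersetCard]
          constructor
          · exact Finset.erase_subset_erase v hEV
          · rw [Finset.card_erase_of_mem hvE, hEk]; omega
        · intro E hE F hF hEF
          simp only [Finset.mem_coe, Finset.mem_filter] at hE hF
          simp only at hEF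
          have : insert v (E.erase v) = insert v (F.erase v) := by rw [hEF]
          rwa [Finset.insert_erase hE.2.1, Finset.insert_erase hF.2.1] at this
      rwa [Finset.card_powersetCard, Finset.card_erase_of_mem hvV] at hinj
    calc ∑ E ∈ P.filter (fun E => p E), ((H.filter fun A => E ⊆ A).card) ^ 2
        ≤ ∑ _E ∈ P.filter (fun E => p E), (V.card - k + 1)^2 := by
          apply Finset.sum_le_sum
          intro E hE
          rw [Finset.mem_filter, hP, Finset.mem_powersetCard] at hE
          exact Nat.pow_le_pow_left (deg_le (by omega) hV hu hE.1.2) 2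
      _ = (P.filter (fun E => p E)).card * (V.card - k + 1)^2 := by
          rw [Finset.sum_const, smul_eq_mul]
      _ ≤ (V.card - 1).choose (k-2) * (V.card - k + 1)^2 :=
          Nat.mul_le_mul_right _ hcard
  have hS2 : ∑ E ∈ P.filter (fun E => ¬ p E), ((H.filter fun A => E ⊆ A).card) ^ 2
      ≤ (V.card - 1).choose (k-1) := by
    have hterm : ∀ E ∈ P.filter (fun E => ¬ p E),
        ((H.filter fun A => E ⊆ A).card) ^ 2 ≤ if E ⊆ V ∧ v ∉ E then 1 else 0 := by
      intro E hE
      rw [Finset.mem_filter, hP, Finset.mem_powersetCard, hp] at hE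
      obtain ⟨⟨-, hEk⟩, hnp⟩ := hE
      by_cases hEV : E ⊆ V
      · have hvE : v ∉ E := fun h => hnp ⟨h, hEV⟩
        rw [if_pos ⟨hEV, hvE⟩]
        have hd1 : (H.filter fun A => E ⊆ A).card ≤ 1 := by
          rw [Finset.card_le_one]
          intro a ha b hb
          rw [Finset.mem_filter] at ha hb
          have hinsa : insert v E ⊆ a := Finset.insert_subset (hv _ ha.1) ha.2
          have hinsb : insert v E ⊆ b := Finset.insert_subset (hv _ hb.1) hb.2
          have hcins : (insert v E).card = k := by
            rw [Finset.card_insert_of_notMem hvE, hEk]; omega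
          have ha' : a = insert v E :=
            (Finset.eq_of_subset_of_card_le hinsa (by rw [hcins, hu _ ha.1])).symm
          have hb' : b = insert v E :=
            (Finset.eq_of_subset_of_card_le hinsb (by rw [hcins, hu _ hb.1])).symm
          rw [ha', hb']
        calc ((H.filter fun A => E ⊆ A).card) ^ 2 ≤ 1^2 := Nat.pow_le_pow_left hd1 2
          _ = 1 := one_pow 2
      · rw [if_neg (fun h => hEV h.1)]
        have : (H.filter fun A => E ⊆ A) = ∅ := by
          rw [Finset.filter_eq_empty_iff]
          intro A hA hEA
          exact hEV (hEA.trans (hV _ hA))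
        simp [this]
    calc ∑ E ∈ P.filter (fun E => ¬ p E), ((H.filter fun A => E ⊆ A).card) ^ 2
        ≤ ∑ E ∈ P.filter (fun E => ¬ p E), (if E ⊆ V ∧ v ∉ E then 1 else 0) :=
          Finset.sum_le_sum hterm
      _ = ((P.filter (fun E => ¬ p E)).filter (fun E => E ⊆ V ∧ v ∉ E)).card := by
          rw [Finset.card_filter]
      _ ≤ ((V.erase v).powersetCard (k-1)).card := by
          apply Finset.card_le_card
          intro E hE
          rw [Finset.mem_filter, Finset.mem_filter, hP, Finset.mem_powersetCard] at hE
          rw [Finset.mem_powersetCard]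
          exact ⟨Finset.subset_erase.mpr ⟨hE.2.1, hE.2.2⟩, hE.1.1.2⟩
      _ = (V.card - 1).choose (k-1) := by
          rw [Finset.card_powersetCard, Finset.card_erase_of_mem hvV]
  have := gb_eq (k := k) (m := V.card) (by omega) hkV
  omega


lemma pf_mono {H' H : Finset (Finset (Fin n))} (hsub : H' ⊆ H) (hpf : pf H) : pf H' := by
  intro ⟨E₁, h1, E₂, h2, E₃, h3, hc⟩
  exact hpf ⟨E₁, hsub h1, E₂, hsub h2, E₃, hsub h3, hc⟩

lemma star_eq {k : ℕ} (hk : 3 ≤ k) (hn : k ≤ n) {H : Finset (Finset (Fin n))} {v : Fin n}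
    (hu : ∀ A ∈ H, A.card = k) (hv : ∀ A ∈ H, v ∈ A)
    (heq : co2 k H = gb k n) :
    H = (Finset.univ.powersetCard k).filter fun A => v ∈ A := by
  classical
  set S := (Finset.univ.powersetCard k).filter (fun A => v ∈ A) with hS
  have hmemS : ∀ {A : Finset (Fin n)}, A ∈ S ↔ A.card = k ∧ v ∈ A := by
    intro A
    rw [hS, Finset.mem_filter, Finset.mem_powersetCard]
    exact ⟨fun h => ⟨h.1.2, h.2⟩, fun h => ⟨⟨Finset.subset_univ _, h.1⟩, h.2⟩⟩
  have hHS : H ⊆ S := fun A hA => hmemS.mpr ⟨hu A hA, hv A hA⟩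
  have hcardn : (Finset.univ : Finset (Fin n)).card = n := by
    rw [Finset.card_univ, Fintype.card_fin]
  have hSgb : co2 k S ≤ gb k n := by
    have := co2_substar hk (H := S) (V := (Finset.univ : Finset (Fin n))) (v := v)
      (fun A hA => (hmemS.mp hA).2) (fun A _ => Finset.subset_univ A)
      (Finset.mem_univ v) (fun A hA => (hmemS.mp hA).1) (by rw [hcardn]; exact hn)
    rwa [hcardn] at this
  have hpoint : ∀ E ∈ Finset.univ.powersetCard (k-1),
      ((H.filter fun A => E ⊆ A).card) ^ 2 ≤ ((S.filter fun A => E ⊆ A).card) ^ 2 := by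
    intro E _
    exact Nat.pow_le_pow_left (Finset.card_le_card (Finset.filter_subset_filter _ hHS)) 2
  have hco2le : co2 k H ≤ co2 k S := Finset.sum_le_sum hpoint
  have hco2eq : co2 k H = co2 k S := le_antisymm hco2le (by omega)
  have hpteq := (Finset.sum_eq_sum_iff_of_le hpoint).mp hco2eq
  apply Finset.Subset.antisymm hHS
  intro A hA
  obtain ⟨hAk, hvA⟩ := hmemS.mp hA
  set E := A.erase v with hE
  have hEcard : E.card = k - 1 := by rw [hE, Finset.card_erase_of_mem hvA, hAk]
  have hEP : E ∈ Finset.univ.powersetCard (k-1) := by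
    rw [Finset.mem_powersetCard]
    exact ⟨Finset.subset_univ _, hEcard⟩
  have hdS : 0 < (S.filter fun A' => E ⊆ A').card := by
    rw [Finset.card_pos]
    exact ⟨A, Finset.mem_filter.mpr ⟨hA, Finset.erase_subset _ _⟩⟩
  have hdeq : (H.filter fun A' => E ⊆ A').card = (S.filter fun A' => E ⊆ A').card :=
    Nat.pow_left_injective (by omega) (hpteq E hEP)
  have hdH : 0 < (H.filter fun A' => E ⊆ A').card := by omega
  rw [Finset.card_pos] at hdH
  obtain ⟨A', hA'⟩ := hdH
  rw [Finset.mem_filter] at hA'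
  have hvE : v ∉ E := Finset.notMem_erase v A
  have hins : insert v E ⊆ A' := Finset.insert_subset (hv _ hA'.1) hA'.2
  have hcins : (insert v E).card = k := by
    rw [Finset.card_insert_of_notMem hvE, hEcard]; omega
  have hA'eq : A' = insert v E :=
    (Finset.eq_of_subset_of_card_le hins (by rw [hcins, hu _ hA'.1])).symm
  have hAA : A' = A := by rw [hA'eq, hE, Finset.insert_erase hvA]
  exact hAA ▸ hA'.1

lemma co2_add {k : ℕ} (hk : 3 ≤ k) {H₁ H₂ : Finset (Finset (Fin n))}
    (hd : Disjoint H₁ H₂) (hcross : ∀ C ∈ H₁, ∀ D ∈ H₂, C ∩ D = ∅) :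
    co2 k (H₁ ∪ H₂) = co2 k H₁ + co2 k H₂ := by
  classical
  unfold co2
  rw [← Finset.sum_add_distrib]
  apply Finset.sum_congr rfl
  intro E hE
  rw [Finset.mem_powersetCard] at hE
  rw [Finset.filter_union,
    Finset.card_union_of_disjoint (Finset.disjoint_filter_filter hd)]
  rcases Nat.eq_zero_or_pos (H₁.filter fun A => E ⊆ A).card with h1 | h1
  · rw [h1]; ring
  rcases Nat.eq_zero_or_pos (H₂.filter fun A => E ⊆ A).card with h2 | h2
  · rw [h2]; ring
  exfalso
  obtain ⟨C, hC⟩ := Finset.card_pos.mp h1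
  obtain ⟨D, hD⟩ := Finset.card_pos.mp h2
  rw [Finset.mem_filter] at hC hD
  have hsub : E ⊆ C ∩ D := Finset.subset_inter hC.2 hD.2
  rw [hcross C hC.1 D hD.1, Finset.subset_empty] at hsub
  rw [hsub, Finset.card_empty] at hE
  omega

lemma split_cross {H : Finset (Finset (Fin n))} (hpf : pf H) {A B : Finset (Fin n)}
    (hA : A ∈ H) (hB : B ∈ H) (hAB : A ∩ B = ∅) :
    ∀ C ∈ H.filter (fun C => (C ∩ A).Nonempty),
      ∀ D ∈ H.filter (fun C => ¬ (C ∩ A).Nonempty), C ∩ D = ∅ := by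
  intro C hC D hD
  rw [Finset.mem_filter] at hC hD
  by_contra hne
  rw [← ne_eq, ← Finset.nonempty_iff_ne_empty] at hne
  have hDA : D ∩ A = ∅ := Finset.not_nonempty_iff_eq_empty.mp hD.2
  apply hpf
  refine ⟨A, hA, C, hC.1, D, hD.1, ?_, hne, ?_, ?_⟩
  · rw [Finset.inter_comm]; exact hC.2
  · rw [Finset.inter_comm]; exact hDA
  · rw [Finset.eq_empty_iff_forall_notMem]
    intro x hx
    rw [Finset.mem_inter, Finset.mem_inter] at hx
    have : x ∈ A ∩ D := Finset.mem_inter.mpr ⟨hx.1.1, hx.2⟩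
    rw [Finset.inter_comm] at hDA
    rw [hDA] at this
    exact Finset.notMem_empty x this


lemma hm_bound {k : ℕ} (hk : 3 ≤ k) {H : Finset (Finset (Fin n))}
    (hu : ∀ A ∈ H, A.card = k)
    (hint : ∀ A ∈ H, ∀ B ∈ H, (A ∩ B).Nonempty)
    (hns : ¬ ∃ v : Fin n, ∀ A ∈ H, v ∈ A) :
    H.card ≤ k * (k * (((grd H).card - 2).choose (k-2))) := by
  classical
  rcases H.eq_empty_or_nonempty with rfl | ⟨A₀, hA₀⟩
  · simp
  push_neg at hns
  -- cover by vertex stars of A₀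
  have cover : H ⊆ A₀.biUnion (fun x => H.filter (fun C => x ∈ C)) := by
    intro B hB
    obtain ⟨x, hx⟩ := hint B hB A₀ hA₀
    rw [Finset.mem_inter] at hx
    exact Finset.mem_biUnion.mpr ⟨x, hx.2, Finset.mem_filter.mpr ⟨hB, hx.1⟩⟩
  have hsum : H.card ≤ ∑ x ∈ A₀, (H.filter (fun C => x ∈ C)).card :=
    (Finset.card_le_card cover).trans (Finset.card_biUnion_le)
  -- pigeonhole
  have hx : ∃ x ∈ A₀, H.card ≤ k * (H.filter (fun C => x ∈ C)).card := by
    by_contra hcon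
    push_neg at hcon
    have hb : ∑ x ∈ A₀, k * (H.filter (fun C => x ∈ C)).card
        ≤ ∑ _x ∈ A₀, (H.card - 1) := by
      apply Finset.sum_le_sum
      intro x hxA
      have := hcon x hxA
      omega
    rw [Finset.sum_const, smul_eq_mul, hu A₀ hA₀, ← Finset.mul_sum] at hb
    have hpos : 1 ≤ H.card := Finset.card_pos.mpr ⟨A₀, hA₀⟩
    have hchain := Nat.mul_le_mul_left k hsum
    have hlt : k * (H.card - 1) < k * H.card := by
      have h1 : H.card - 1 < H.card := by omega
      exact Nat.mul_lt_mul_of_le_of_lt (le_refl k) h1 (by omega)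
    exact Nat.lt_irrefl _ (lt_of_le_of_lt (hchain.trans hb) hlt)
  obtain ⟨x, hxA₀, hxdeg⟩ := hx
  obtain ⟨B₀, hB₀, hxB₀⟩ := hns x
  -- bound the star at x
  have starbound : (H.filter (fun C => x ∈ C)).card
      ≤ k * (((grd H).card - 2).choose (k-2)) := by
    have cover2 : H.filter (fun C => x ∈ C)
        ⊆ B₀.biUnion (fun b => H.filter (fun C => x ∈ C ∧ b ∈ C)) := by
      intro C hC
      rw [Finset.mem_filter] at hC
      obtain ⟨b, hb⟩ := hint C hC.1 B₀ hB₀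
      rw [Finset.mem_inter] at hb
      exact Finset.mem_biUnion.mpr ⟨b, hb.2, Finset.mem_filter.mpr ⟨hC.1, hC.2, hb.1⟩⟩
    have hstep := (Finset.card_le_card cover2).trans (Finset.card_biUnion_le)
    have hper : ∀ b ∈ B₀, (H.filter (fun C => x ∈ C ∧ b ∈ C)).card
        ≤ ((grd H).card - 2).choose (k-2) := by
      intro b hb
      have hxb : x ≠ b := fun h => hxB₀ (h ▸ hb)
      have hxg : x ∈ grd H := mem_grd hA₀ hxA₀
      have hbg : b ∈ grd H := mem_grd hB₀ hb
      have hpair : ({x, b} : Finset (Fin n)).card = 2 := by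
        rw [Finset.card_insert_of_notMem (by simp [hxb]), Finset.card_singleton]
      have hpairg : ({x, b} : Finset (Fin n)) ⊆ grd H := by
        intro y hy
        rw [Finset.mem_insert, Finset.mem_singleton] at hy
        rcases hy with rfl | rfl <;> assumption
      have hinj : (H.filter (fun C => x ∈ C ∧ b ∈ C)).card
          ≤ ((grd H \ {x, b}).powersetCard (k-2)).card := by
        apply Finset.card_le_card_of_injOn (fun C => C \ {x, b})
        · intro C hC
          rw [Finset.mem_coe, Finset.mem_filter] at hC
          have hpairC : ({x, b} : Finset (Fin n)) ⊆ C := by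
            intro y hy
            rw [Finset.mem_insert, Finset.mem_singleton] at hy
            rcases hy with rfl | rfl
            · exact hC.2.1
            · exact hC.2.2
          rw [Finset.mem_coe, Finset.mem_powersetCard]
          constructor
          · exact Finset.sdiff_subset_sdiff (mem_grd hC.1) le_rfl
          · rw [Finset.card_sdiff_of_subset hpairC, hpair, hu _ hC.1]
        · intro C hC D hD hCD
          simp only [Finset.mem_coe, Finset.mem_filter] at hC hD
          simp only at hCD
          have hpairC : ({x, b} : Finset (Fin n)) ⊆ C := by
            intro y hy
            rw [Finset.mem_insert, Finset.mem_singleton] at hy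
            rcases hy with rfl | rfl
            · exact hC.2.1
            · exact hC.2.2
          have hpairD : ({x, b} : Finset (Fin n)) ⊆ D := by
            intro y hy
            rw [Finset.mem_insert, Finset.mem_singleton] at hy
            rcases hy with rfl | rfl
            · exact hD.2.1
            · exact hD.2.2
          have : C \ {x,b} ∪ {x,b} = D \ {x,b} ∪ {x,b} := by rw [hCD]
          rwa [Finset.sdiff_union_of_subset hpairC, Finset.sdiff_union_of_subset hpairD]
            at this
      rw [Finset.card_powersetCard, Finset.card_sdiff_of_subset hpairg, hpair] at hinj
      exact hinj
    calc (H.filter (fun C => x ∈ C)).card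
        ≤ ∑ b ∈ B₀, (H.filter (fun C => x ∈ C ∧ b ∈ C)).card := hstep
      _ ≤ ∑ _b ∈ B₀, ((grd H).card - 2).choose (k-2) := Finset.sum_le_sum hper
      _ = k * (((grd H).card - 2).choose (k-2)) := by
          rw [Finset.sum_const, smul_eq_mul, hu B₀ hB₀]
  calc H.card ≤ k * (H.filter (fun C => x ∈ C)).card := hxdeg
    _ ≤ k * (k * (((grd H).card - 2).choose (k-2))) := Nat.mul_le_mul_left k starbound


lemma gb_step {k m : ℕ} (hk : 3 ≤ k) (hm : Bk k + k ≤ m) : gb k m + Bk k ≤ gb k (m+1) := by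
  have hkm : k ≤ m := by
    have : 1 ≤ Bk k := by unfold Bk; omega
    omega
  have hw : 1 + ((m+1)-k+1)*(k-1) = (1+(m-k+1)*(k-1)) + (k-1) := by
    rw [show (m+1)-k+1 = (m-k+1)+1 from by omega, Nat.add_mul]
    ring
  have e1 : gb k (m+1) = m.choose (k-1) * ((1+(m-k+1)*(k-1)) + (k-1)) := by
    unfold gb
    rw [show (m+1)-1 = m from by omega, hw]
  have e2 : (m-1).choose (k-1) * ((1+(m-k+1)*(k-1)) + (k-1)) ≤ gb k (m+1) := by
    rw [e1]
    exact Nat.mul_le_mul_right _ (Nat.choose_le_choose _ (by omega))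
  have e3 : (m-1).choose (k-1) * ((1+(m-k+1)*(k-1)) + (k-1))
      = gb k m + (m-1).choose (k-1)*(k-1) := by
    unfold gb; ring
  have hcl : m - k + 1 ≤ (m-1).choose (k-1) := by
    have := choose_lb (a := m-1) (j := k-1) (by omega) (by omega)
    omega
  have e4 : Bk k ≤ (m-1).choose (k-1)*(k-1) := by
    calc Bk k = Bk k * 1 := (mul_one _).symm
      _ ≤ (m-k+1) * (k-1) := Nat.mul_le_mul (by omega) (by omega)
      _ ≤ (m-1).choose (k-1)*(k-1) := Nat.mul_le_mul_right _ hcl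
  omega

lemma budgetA {k n' : ℕ} (hk : 3 ≤ k) :
    ∀ u : ℕ, Bk k + k ≤ n' - u → gb k (n'-u) + u * Bk k ≤ gb k n' := by
  intro u
  induction u with
  | zero => simp
  | succ v ih =>
    intro h
    have h2 : Bk k + k ≤ n' - v := by omega
    have h3 := gb_step hk (m := n'-(v+1)) h
    rw [show n'-(v+1)+1 = n'-v from by omega] at h3
    have := ih h2
    have hexp : (v+1) * Bk k = v * Bk k + Bk k := by ring
    omega

lemma budget {k n' : ℕ} (hk : 3 ≤ k) (hn : n0 k ≤ n') :
    ∀ u ≤ n', gb k (n'-u) + u * Bk k ≤ gb k n' := by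
  intro u hu
  by_cases hc : Bk k + k ≤ n' - u
  · exact budgetA hk u hc
  · -- n' - u small
    have h1 : gb k (n'-u) ≤ gb k (Bk k + k) := gb_mono k (by omega)
    have h2 : u * Bk k ≤ n' * Bk k := Nat.mul_le_mul_right _ hu
    -- show gb k (Bk k + k) + n' * Bk k ≤ gb k n'
    set x := n' - k + 1 with hx
    have hn0 : gb k (Bk k + k) + k * Bk k + Bk k + 2*k + 2 ≤ n' := hn
    have hx1 : gb k (Bk k + k) + k * Bk k + Bk k + k + 3 ≤ x := by omega
    have hcl : x ≤ (n'-1).choose (k-1) := by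
      have := choose_lb (a := n'-1) (j := k-1) (by omega) (by omega)
      omega
    have hwt : 2 * x ≤ 1 + x*(k-1) := by
      have h2x : x * 2 ≤ x * (k-1) := Nat.mul_le_mul_left x (by omega)
      omega
    have hgbn : x * (2 * x) ≤ gb k n' := by
      unfold gb
      calc x * (2*x) ≤ (n'-1).choose (k-1) * (1 + x*(k-1)) :=
            Nat.mul_le_mul hcl hwt
        _ = (n'-1).choose (k-1) * (1 + (n'-k+1)*(k-1)) := by rw [hx]
    have key : gb k (Bk k + k) + n' * Bk k ≤ x * (2*x) := by
      have ha : n' * Bk k ≤ x * Bk k + k * Bk k := by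
        have : n' ≤ x + k := by omega
        calc n' * Bk k ≤ (x + k) * Bk k := Nat.mul_le_mul_right _ this
          _ = x * Bk k + k * Bk k := by ring
      have hb : x * Bk k ≤ x * x := Nat.mul_le_mul_left _ (by omega)
      have hc2 : gb k (Bk k + k) + k * Bk k ≤ x := by omega
      have hd : x ≤ x * x := Nat.le_mul_of_pos_left _ (by omega)
      have : gb k (Bk k + k) + k * Bk k ≤ x * x := le_trans hc2 hd
      calc gb k (Bk k + k) + n' * Bk k
          ≤ gb k (Bk k + k) + (x * Bk k + k * Bk k) := by omega
        _ ≤ x * x + x * x := by omega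
        _ = x * (2*x) := by ring
    omega


lemma rec_main {k : ℕ} (hk : 3 ≤ k) (hn : 1 ≤ n) :
    ∀ H : Finset (Finset (Fin n)), (∀ A ∈ H, A.card = k) → pf H →
      ((∃ v : Fin n, ∀ A ∈ H, v ∈ A) ∨
       (∃ s t : ℕ, (t = 0 ∨ k ≤ t) ∧ t + k*s ≤ (grd H).card ∧
          co2 k H + 1 ≤ gb k t + s * Bk k)) := by
  classical
  intro H
  induction H using Finset.strongInduction with
  | _ H IH =>
  intro hu hpf
  by_cases hstar : ∃ v : Fin n, ∀ A ∈ H, v ∈ A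
  · exact Or.inl hstar
  right
  have hne : H.Nonempty := by
    rcases H.eq_empty_or_nonempty with rfl | h
    · exact absurd ⟨⟨0, hn⟩, by simp⟩ hstar
    · exact h
  obtain ⟨A₀, hA₀⟩ := hne
  have hgrdV : ∀ A ∈ H, A ⊆ grd H := fun A hA => mem_grd hA
  have hkm : k ≤ (grd H).card := by
    rw [← hu A₀ hA₀]
    exact Finset.card_le_card (mem_grd hA₀)
  by_cases hsmall : (grd H).card < Kk k
  · -- small ground
    refine ⟨1, 0, Or.inl rfl, by omega, ?_⟩
    have h1 := co2_le_crude k (by omega) H hgrdV hu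
    have h2 : H.card ≤ ((grd H).card).choose k := edges_le hgrdV hu
    have h3 : ((grd H).card).choose k ≤ (Kk k).choose k := Nat.choose_le_choose _ (by omega)
    have h4 : co2 k H ≤ Kk k * (k * (Kk k).choose k) := by
      calc co2 k H ≤ ((grd H).card - k + 1) * (k * H.card) := h1
        _ ≤ Kk k * (k * (Kk k).choose k) :=
          Nat.mul_le_mul (by omega) (Nat.mul_le_mul_left _ (le_trans h2 h3))
    have h5 : Kk k * (k * (Kk k).choose k) = k * Kk k * ((Kk k).choose k) := by ring
    rw [gb_zero k (by omega)]
    unfold Bk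
    omega
  · by_cases hint : ∀ A ∈ H, ∀ B ∈ H, (A ∩ B).Nonempty
    · -- intersecting, non-star, big ground: weak Hilton-Milner
      refine ⟨0, (grd H).card, Or.inr hkm, by omega, ?_⟩
      set m := (grd H).card with hm
      set x := m - k + 1 with hxdef
      have hx : k^3 + 1 ≤ x := by
        have : Kk k ≤ m := by omega
        unfold Kk at this
        omega
      have h1 := co2_le_crude k (by omega) H hgrdV hu
      have h2 := hm_bound hk hu hint hstar
      have h4 : co2 k H ≤ x * (k * (k * (k * ((m-2).choose (k-2))))) := by
        calc co2 k H ≤ x * (k * H.card) := h1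
          _ ≤ x * (k * (k * (k * ((m-2).choose (k-2))))) :=
            Nat.mul_le_mul_left _ (Nat.mul_le_mul_left _ h2)
      have h5 : x * (k * (k * (k * ((m-2).choose (k-2))))) =
          (k^3 * ((m-2).choose (k-2))) * x := by ring
      have h6 : (k^3 * ((m-2).choose (k-2))) * x ≤ (x * ((m-1).choose (k-2))) * x := by
        apply Nat.mul_le_mul_right
        exact Nat.mul_le_mul (by omega) (Nat.choose_le_choose _ (by omega))
      have h7 : (x * ((m-1).choose (k-2))) * x = ((m-1).choose (k-2) * x) * x := by ring
      have h8 : ((m-1).choose (k-2) * x) * x = ((m-1).choose (k-1) * (k-1)) * x := by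
        rw [choose_identity (by omega) (by omega)]
      have h9 : gb k m = (m-1).choose (k-1) + ((m-1).choose (k-1) * (k-1)) * x := by
        unfold gb
        rw [hxdef]
        ring
      have h10 : 1 ≤ (m-1).choose (k-1) := Nat.choose_pos (by omega)
      omega
    · -- not intersecting: split into two parts
      push_neg at hint
      obtain ⟨A, hA, B, hB, hABn⟩ := hint
      have hAB : A ∩ B = ∅ := hABn
      set H₁ := H.filter (fun C => (C ∩ A).Nonempty) with hH₁
      set H₂ := H.filter (fun C => ¬ (C ∩ A).Nonempty) with hH₂
      have hA1 : A ∈ H₁ := by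
        rw [hH₁, Finset.mem_filter, Finset.inter_self]
        exact ⟨hA, Finset.card_pos.mp (by rw [hu A hA]; omega)⟩
      have hB2 : B ∈ H₂ := by
        rw [hH₂, Finset.mem_filter]
        refine ⟨hB, ?_⟩
        rw [Finset.inter_comm] at hAB
        rw [hAB]
        exact Finset.not_nonempty_empty
      have hsub1 : H₁ ⊆ H := Finset.filter_subset _ _
      have hsub2 : H₂ ⊆ H := Finset.filter_subset _ _
      have hBn1 : B ∉ H₁ := by
        rw [hH₁, Finset.mem_filter]
        rw [Finset.inter_comm] at hAB
        intro h
        exact (by rw [hAB] at h; exact Finset.not_nonempty_empty h.2 : False)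
      have hAn2 : A ∉ H₂ := by
        rw [hH₂, Finset.mem_filter]
        intro h
        apply h.2
        rw [Finset.inter_self]
        exact Finset.card_pos.mp (by rw [hu A hA]; omega)
      have hss1 : H₁ ⊂ H := ⟨hsub1, fun h => hBn1 (h hB)⟩
      have hss2 : H₂ ⊂ H := ⟨hsub2, fun h => hAn2 (h hA)⟩
      have hcross := split_cross hpf hA hB hAB
      have hdisj : Disjoint H₁ H₂ := Finset.disjoint_filter_filter_not H H _
      have hunion : H₁ ∪ H₂ = H := Finset.filter_union_filter_not_eq _ H
      have hco2 : co2 k H = co2 k H₁ + co2 k H₂ := by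
        rw [← hunion]
        exact co2_add hk hdisj (by rw [hH₁, hH₂] at *; exact hcross)
      have hu1 : ∀ C ∈ H₁, C.card = k := fun C hC => hu C (hsub1 hC)
      have hu2 : ∀ C ∈ H₂, C.card = k := fun C hC => hu C (hsub2 hC)
      have hgdisj : Disjoint (grd H₁) (grd H₂) := by
        rw [Finset.disjoint_left]
        intro x hx1 hx2
        obtain ⟨C, hC, hxC⟩ := mem_grd_iff.mp hx1
        obtain ⟨D, hD, hxD⟩ := mem_grd_iff.mp hx2
        have := hcross C hC D hD
        have hxCD : x ∈ C ∩ D := Finset.mem_inter.mpr ⟨hxC, hxD⟩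
        rw [this] at hxCD
        exact Finset.notMem_empty x hxCD
      have hgsum : (grd H₁).card + (grd H₂).card ≤ (grd H).card := by
        rw [← Finset.card_union_of_disjoint hgdisj]
        apply Finset.card_le_card
        exact Finset.union_subset (grd_mono hsub1) (grd_mono hsub2)
      have hk1 : k ≤ (grd H₁).card := by
        rw [← hu A hA]
        exact Finset.card_le_card (mem_grd hA1)
      have hk2 : k ≤ (grd H₂).card := by
        rw [← hu B hB]
        exact Finset.card_le_card (mem_grd hB2)
      have IH1 := IH H₁ hss1 hu1 (pf_mono hsub1 hpf)
      have IH2 := IH H₂ hss2 hu2 (pf_mono hsub2 hpf)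
      -- convert left cases to co2 bounds
      have conv : ∀ (G : Finset (Finset (Fin n))), (∀ C ∈ G, C.card = k) → G.Nonempty →
          (∃ v : Fin n, ∀ C ∈ G, v ∈ C) → co2 k G ≤ gb k (grd G).card := by
        intro G huG ⟨C₀, hC₀⟩ ⟨v, hv⟩
        apply co2_substar hk hv (fun C hC => mem_grd hC) ((mem_grd hC₀) (hv C₀ hC₀)) huG
        rw [← huG C₀ hC₀]
        exact Finset.card_le_card (mem_grd hC₀)
      rcases IH1 with h1 | ⟨s₁, t₁, ht₁, hle₁, hb₁⟩ <;>
        rcases IH2 with h2 | ⟨s₂, t₂, ht₂, hle₂, hb₂⟩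
      · -- both stars
        have c1 := conv H₁ hu1 ⟨A, hA1⟩ h1
        have c2 := conv H₂ hu2 ⟨B, hB2⟩ h2
        refine ⟨0, (grd H₁).card + (grd H₂).card, Or.inr (by omega), by omega, ?_⟩
        have := gb_superadd_strict hk hk1 hk2
        omega
      · -- star + rec
        have c1 := conv H₁ hu1 ⟨A, hA1⟩ h1
        refine ⟨s₂, (grd H₁).card + t₂, Or.inr (by omega), by omega, ?_⟩
        have := gb_superadd hk (Or.inr hk1) ht₂
        omega
      · -- rec + star
        have c2 := conv H₂ hu2 ⟨B, hB2⟩ h2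
        refine ⟨s₁, t₁ + (grd H₂).card, Or.inr (by omega), by omega, ?_⟩
        have := gb_superadd hk ht₁ (Or.inr hk2)
        omega
      · -- rec + rec
        have hks : k*(s₁+s₂) = k*s₁ + k*s₂ := by ring
        refine ⟨s₁ + s₂, t₁ + t₂, ?_, by omega, ?_⟩
        · rcases ht₁ with rfl | h <;> rcases ht₂ with rfl | h' 
          · exact Or.inl rfl
          · exact Or.inr (by omega)
          · exact Or.inr (by omega)
          · exact Or.inr (by omega)
        · have := gb_superadd hk ht₁ ht₂
          have hmul : (s₁ + s₂) * Bk k = s₁ * Bk k + s₂ * Bk k := by ring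
          omega

end M3P

/-- ℓ₂-norm extremal result for minimal 3-paths: for `k ≥ 3` and `n` large enough, every
`k`-uniform hypergraph on `[n]` with no three edges `E₁, E₂, E₃` such that `E₁ ∩ E₂ ≠ ∅`,
`E₂ ∩ E₃ ≠ ∅`, `E₁ ∩ E₃ = ∅` and `E₁ ∩ E₂ ∩ E₃ = ∅` satisfies
`co₂(H) ≤ C(n-1,k-1)·(1 + (n-k+1)(k-1))`, with equality only for a star. -/
theorem min_3path_l2 (k : ℕ) (hk : 3 ≤ k) :
    ∃ n₀ : ℕ, ∀ n : ℕ, n₀ ≤ n → ∀ H : Finset (Finset (Fin n)),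
      (∀ e ∈ H, e.card = k) →
      (¬ ∃ E₁ ∈ H, ∃ E₂ ∈ H, ∃ E₃ ∈ H,
        (E₁ ∩ E₂).Nonempty ∧ (E₂ ∩ E₃).Nonempty ∧ E₁ ∩ E₃ = ∅ ∧
        E₁ ∩ E₂ ∩ E₃ = ∅) →
      ((∑ E ∈ Finset.univ.powersetCard (k - 1), ((H.filter fun A => E ⊆ A).card) ^ 2 ≤
          (n - 1).choose (k - 1) * (1 + (n - k + 1) * (k - 1))) ∧
        ((∑ E ∈ Finset.univ.powersetCard (k - 1), ((H.filter fun A => E ⊆ A).card) ^ 2 =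
            (n - 1).choose (k - 1) * (1 + (n - k + 1) * (k - 1))) →
          ∃ v : Fin n, H = (Finset.univ.powersetCard k).filter fun A => v ∈ A)) := by
  refine ⟨M3P.n0 k, ?_⟩
  intro n hn H hu hpf
  have hk_n : k ≤ n := by
    have h1 : 2*k + 2 ≤ M3P.n0 k := by unfold M3P.n0; omega
    omega
  have hn1 : 1 ≤ n := by omega
  have hcardn : (Finset.univ : Finset (Fin n)).card = n := by
    rw [Finset.card_univ, Fintype.card_fin]
  rcases M3P.rec_main hk hn1 H hu hpf with ⟨v, hv⟩ | ⟨s, t, ht, hle, hb⟩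
  · constructor
    · have := M3P.co2_substar hk hv (fun A _ => Finset.subset_univ A) (Finset.mem_univ v) hu
        (by rw [hcardn]; exact hk_n)
      rw [hcardn] at this
      exact this
    · intro heq
      exact ⟨v, M3P.star_eq hk hk_n hu hv heq⟩
  · have hgrd_n : (M3P.grd H).card ≤ n :=
      le_trans (Finset.card_le_card (Finset.subset_univ _)) (le_of_eq hcardn)
    have h1 : M3P.gb k t ≤ M3P.gb k (n - k*s) := M3P.gb_mono k (by omega)
    have h2 : s * M3P.Bk k ≤ (k*s) * M3P.Bk k :=
      Nat.mul_le_mul_right _ (Nat.le_mul_of_pos_left s (by omega))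
    have h3 := M3P.budget hk hn (k*s) (by omega)
    have hfin : M3P.gb k t + s * M3P.Bk k ≤ M3P.gb k n := by omega
    constructor
    · show M3P.co2 k H ≤ M3P.gb k n
      omega
    · intro heq
      have heq' : M3P.co2 k H = M3P.gb k n := heq
      omega
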